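/- Let f be a standard interference function on ℝ₊ᴷ with a fixed point λ*. Then the iteration λ⁽ⁿ⁺¹⁾ = f(λ⁽ⁿ⁾) started from λ⁽⁰⁾ = 0 produces a componentwise nondecreasing sequence that converges to λ*. -/

import Mathlib

/-- For a standard interference function with fixed point `lamStar`, the
iteration started from `0` is componentwise nondecreasing and converges to
`lamStar`. -/
theorem stmt_4 {K : ℕ} (f : (Fin K → ℝ) → (Fin K → ℝ))
    (hpos : ∀ lam, 0 ≤ lam → ∀ i, 0 < f lam i)
    (hmono : ∀ lam mu, 0 ≤ lam → 0 ≤ mu → lam ≤ mu → f lam ≤ f mu)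
    (hscale : ∀ lam, 0 ≤ lam → ∀ α : ℝ, 1 < α → ∀ i, f (α • lam) i < α * f lam i)
    (lamStar : Fin K → ℝ) (hstar : 0 ≤ lamStar) (hfix : f lamStar = lamStar) :
    Monotone (fun n => f^[n] 0) ∧
      Filter.Tendsto (fun n => f^[n] (0 : Fin K → ℝ)) Filter.atTop (nhds lamStar) := by
  set x : ℕ → Fin K → ℝ := fun n => f^[n] 0 with hxdef
  have hsucc : ∀ n, x (n + 1) = f (x n) := fun n => Function.iterate_succ_apply' f n 0
  have hx0 : x 0 = 0 := rfl
  -- nonnegativity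
  have hnn : ∀ n, (0 : Fin K → ℝ) ≤ x n := by
    intro n
    induction n with
    | zero => rw [hx0]
    | succ n ih => rw [hsucc]; intro i; exact (hpos _ ih i).le
  -- single-step monotonicity
  have hle : ∀ n, x n ≤ x (n + 1) := by
    intro n
    induction n with
    | zero => rw [hsucc, hx0]; intro i; exact (hpos 0 le_rfl i).le
    | succ n ih =>
      rw [hsucc (n+1)]
      calc x (n+1) = f (x n) := hsucc n
        _ ≤ f (x (n+1)) := hmono _ _ (hnn n) ((hsucc n) ▸ hnn (n+1)) ih
  have hmonoX : Monotone x := monotone_nat_of_le_succ hle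
  -- bounded above by lamStar
  have hub : ∀ n, x n ≤ lamStar := by
    intro n
    induction n with
    | zero => rw [hx0]; exact hstar
    | succ n ih => rw [hsucc, ← hfix]; exact hmono _ _ (hnn n) hstar ih
  have hstarpos : ∀ i, 0 < lamStar i := fun i => hfix ▸ hpos lamStar hstar i
  -- the limit
  have hbdd : ∀ i, BddAbove (Set.range fun n => x n i) := by
    intro i
    exact ⟨lamStar i, by rintro _ ⟨n, rfl⟩; exact hub n i⟩
  set L : Fin K → ℝ := fun i => ⨆ n, x n i with hLdef
  have htend : ∀ i, Filter.Tendsto (fun n => x n i) Filter.atTop (nhds (L i)) := by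
    intro i
    exact tendsto_atTop_ciSup (fun a b hab => hmonoX hab i) (hbdd i)
  have hxleL : ∀ n, x n ≤ L := fun n i => le_ciSup (hbdd i) n
  have hLnn : (0 : Fin K → ℝ) ≤ L := le_trans (hnn 0) (hxleL 0)
  have hLle : L ≤ lamStar := fun i => ciSup_le fun n => hub n i
  have hLpos : ∀ i, 0 < L i := by
    intro i
    have h1 : x 1 i ≤ L i := hxleL 1 i
    have : 0 < x 1 i := by rw [hsucc 0, hx0]; exact hpos 0 le_rfl i
    linarith
  -- L ≤ f L
  have hLlefL : L ≤ f L := by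
    intro i
    refine ciSup_le fun n => ?_
    cases n with
    | zero => rw [hx0]; exact (hpos L hLnn i).le
    | succ n => rw [hsucc]; exact hmono _ _ (hnn n) hLnn (hxleL n) i
  -- f L ≤ L, using scalability
  have hfLleL : f L ≤ L := by
    intro i
    have key : ∀ α : ℝ, 1 < α → f L i ≤ α * L i := by
      intro α hα
      have hα0 : (0 : ℝ) < α := lt_trans one_pos hα
      -- eventually, L ≤ α • x n
      have hev : ∀ j, ∀ᶠ n in Filter.atTop, L j ≤ α * x n j := by
        intro j
        have hlt : L j / α < L j := div_lt_self (hLpos j) hα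
        filter_upwards [(htend j).eventually (eventually_gt_nhds hlt)] with n hn
        rw [div_lt_iff₀ hα0] at hn
        nlinarith
      obtain ⟨N, hN⟩ := (Filter.eventually_all.2 hev).exists
      have h1 : f L i ≤ f (α • x N) i := by
        refine hmono _ _ hLnn (fun j => ?_) (fun j => ?_) i
        · exact mul_nonneg hα0.le (hnn N j)
        · exact hN j
      have h2 : f (α • x N) i < α * f (x N) i := hscale _ (hnn N) α hα i
      have h3 : f (x N) i ≤ L i := by rw [← hsucc]; exact hxleL (N+1) i
      nlinarith
    -- take α → 1⁺
    have htend1 : Filter.Tendsto (fun m : ℕ => (1 + 1 / (m + 1 : ℝ)) * L i)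
        Filter.atTop (nhds (L i)) := by
      have : Filter.Tendsto (fun m : ℕ => (1 + 1 / (m + 1 : ℝ))) Filter.atTop (nhds 1) := by
        have := tendsto_one_div_add_atTop_nhds_zero_nat (𝕜 := ℝ)
        simpa using Filter.Tendsto.const_add 1 this
      simpa using this.mul_const (L i)
    refine ge_of_tendsto' htend1 fun m => key _ ?_
    have : (0 : ℝ) < 1 / (m + 1 : ℝ) := by positivity
    linarith
  have hfL : f L = L := le_antisymm hfLleL hLlefL
  -- uniqueness: L = lamStar
  have hLeq : L = lamStar := by
    rcases Nat.eq_zero_or_pos K with hK | hK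
    · subst hK; funext i; exact i.elim0
    haveI : Nonempty (Fin K) := ⟨⟨0, hK⟩⟩
    obtain ⟨i₀, -, hi₀⟩ := Finset.exists_mem_eq_sup' Finset.univ_nonempty
      (fun i => lamStar i / L i)
    have hsup : ∀ i, lamStar i / L i ≤ lamStar i₀ / L i₀ := by
      intro i
      rw [← hi₀]
      exact Finset.le_sup' (fun i => lamStar i / L i) (Finset.mem_univ i)
    have hαub : ∀ i, lamStar i ≤ (lamStar i₀ / L i₀) * L i := by
      intro i
      have := hsup i
      rw [div_le_iff₀ (hLpos i)] at this
      linarith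
    have hα1 : 1 ≤ lamStar i₀ / L i₀ :=
      le_trans ((one_le_div (hLpos ⟨0, hK⟩)).2 (hLle ⟨0, hK⟩)) (hsup ⟨0, hK⟩)
    rcases eq_or_lt_of_le hα1 with hα | hα
    · -- α = 1 : lamStar ≤ L
      refine le_antisymm hLle fun i => ?_
      have := hαub i
      rw [← hα] at this
      linarith
    · -- α > 1 : contradiction
      exfalso
      have hlege : lamStar ≤ f ((lamStar i₀ / L i₀) • L) := by
        have h := hmono lamStar ((lamStar i₀ / L i₀) • L) hstar
          (fun j => mul_nonneg (by linarith) (hLnn j)) (fun j => hαub j)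
        rwa [hfix] at h
      have h2 : f ((lamStar i₀ / L i₀) • L) i₀ < (lamStar i₀ / L i₀) * f L i₀ :=
        hscale L hLnn _ hα i₀
      rw [hfL] at h2
      have h3 : (lamStar i₀ / L i₀) * L i₀ = lamStar i₀ :=
        div_mul_cancel₀ _ (hLpos i₀).ne'
      have := hlege i₀
      linarith
  refine ⟨hmonoX, ?_⟩
  rw [← hLeq]
  exact tendsto_pi_nhds.2 htend
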